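/- arXiv:2208.03314 — 6 statements merged into one kernel-verified Lean document; each statement's English description precedes it below -/
import Mathlib

section
/- The normalization constant G(N, J̄; x) = ∑ over states (n_i) summing to N of ∏_{j=1}^J (∏_{k=1}^{n_j} η_j/μ_j(k)) · ∏_{i=2}^J (η_i d_i(x))^{n_{ia}+n_{ib}} / (n_{ia}! n_{ib}!) equals ∑_{n=0}^N C_n(N, J̄) h(x)^n, where C_n(N, J̄) = (2^n/n!) ∑_{n_1+...+n_J = N−n} ∏_{j=1}^J ∏_{k=1}^{n_j} η_j/μ_j(k) and h(x) = ∑_{j=2}^J η_j d_j(x). -/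
open Finset

/-- Divided-form multinomial theorem over `Fin m` tuples. -/
lemma sum_prod_pow_div_factorial (m n : ℕ) (x : Fin m → ℝ) :
    ∑ p ∈ Finset.Nat.antidiagonalTuple m n,
        ∏ i, x i ^ p i / (Nat.factorial (p i) : ℝ)
      = (∑ i, x i) ^ n / (Nat.factorial n : ℝ) := by
  rw [← Finset.piAntidiag_univ_fin_eq_antidiagonalTuple n m,
    Finset.sum_pow_eq_sum_piAntidiag, Finset.sum_div]
  refine Finset.sum_congr rfl fun p hp => ?_
  rw [Finset.mem_piAntidiag] at hp
  have hsum : ∑ i, p i = n := hp.1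
  have hspec := Nat.multinomial_spec (Finset.univ : Finset (Fin m)) p
  rw [hsum] at hspec
  have h1 : (∏ i, ((p i).factorial : ℝ)) * (Nat.multinomial Finset.univ p : ℝ)
      = (n.factorial : ℝ) := by exact_mod_cast hspec
  have hn : (n.factorial : ℝ) ≠ 0 := Nat.cast_ne_zero.2 n.factorial_ne_zero
  have hprod : (∏ i, ((p i).factorial : ℝ)) ≠ 0 :=
    Finset.prod_ne_zero_iff.2 fun i _ => Nat.cast_ne_zero.2 (p i).factorial_ne_zero
  rw [Finset.prod_div_distrib, div_eq_div_iff hprod hn]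
  linear_combination -(∏ i, x i ^ p i) * h1

/-- Splitting a sum over `antidiagonalTuple (a + b)` into a sum over the
antidiagonal and a pair of shorter tuples. -/
lemma sum_antidiagonalTuple_split (a b N : ℕ) (F : (Fin (a + b) → ℕ) → ℝ) :
    ∑ p ∈ Finset.Nat.antidiagonalTuple (a + b) N, F p
      = ∑ mk ∈ Finset.HasAntidiagonal.antidiagonal N,
          ∑ q ∈ Finset.Nat.antidiagonalTuple a mk.1,
            ∑ r ∈ Finset.Nat.antidiagonalTuple b mk.2, F (Fin.append q r) := by
  have := (Finset.sum_sigma (Finset.HasAntidiagonal.antidiagonal N)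
    (fun mk : ℕ × ℕ => Finset.Nat.antidiagonalTuple a mk.1 ×ˢ
      Finset.Nat.antidiagonalTuple b mk.2)
    (fun x => F (Fin.append x.2.1 x.2.2)))
  rw [← Finset.sum_congr (rfl : Finset.HasAntidiagonal.antidiagonal N = Finset.HasAntidiagonal.antidiagonal N) (fun (mk : ℕ × ℕ) _ => Finset.sum_product
    (f := fun qr : (Fin a → ℕ) × (Fin b → ℕ) => F (Fin.append qr.1 qr.2))
    (s := Finset.Nat.antidiagonalTuple a mk.1)
    (t := Finset.Nat.antidiagonalTuple b mk.2)), ← this]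
  refine Finset.sum_nbij'
    (fun p => ⟨(∑ i, p (Fin.castAdd b i), ∑ i, p (Fin.natAdd a i)),
      (fun i => p (Fin.castAdd b i), fun i => p (Fin.natAdd a i))⟩)
    (fun x => Fin.append x.2.1 x.2.2) ?_ ?_ ?_ ?_ ?_
  · intro p hp
    rw [Finset.Nat.mem_antidiagonalTuple] at hp
    simp only [Finset.mem_sigma, Finset.HasAntidiagonal.mem_antidiagonal, Finset.mem_product,
      Finset.Nat.mem_antidiagonalTuple]
    exact ⟨by rw [← hp, Fin.sum_univ_add], trivial, trivial⟩
  · intro x hx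
    simp only [Finset.mem_sigma, Finset.HasAntidiagonal.mem_antidiagonal, Finset.mem_product,
      Finset.Nat.mem_antidiagonalTuple] at hx
    rw [Finset.Nat.mem_antidiagonalTuple, Fin.sum_univ_add]
    simp only [Fin.append_left, Fin.append_right]
    rw [hx.2.1, hx.2.2, hx.1]
  · intro p _
    simp only [Fin.append_castAdd_natAdd]
  · intro x hx
    simp only [Finset.mem_sigma, Finset.HasAntidiagonal.mem_antidiagonal, Finset.mem_product,
      Finset.Nat.mem_antidiagonalTuple] at hx
    obtain ⟨mk, q, r⟩ := x
    simp only [Fin.append_left, Fin.append_right]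
    have h1 : ∑ i, q i = mk.1 := hx.2.1
    have h2 : ∑ i, r i = mk.2 := hx.2.2
    refine Sigma.ext (by rw [h1, h2]) ?_
    exact heq_of_eq (by simp)
  · intro p _
    congr 1
    exact (Fin.append_castAdd_natAdd).symm

/-- The normalization constant of the star-like Gordon-Newell network with
lanes equals `∑_{n=0}^N C_n(N, J̄) h(x)^n`, where
`C_n(N, J̄) = (2^n/n!) ∑_{n_1+...+n_J = N−n} ∏_j ∏_{k=1}^{n_j} η_j/μ_j(k)`
and `h(x) = ∑_{j=2}^J η_j d_j(x)`.
Stations are indexed by `Fin (w+1)` (`0` is the center, warehouse `i : Fin w`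
is station `i.succ`); the lanes `ia`, `ib` are the last `w + w` coordinates of
a state tuple; states are tuples of nonnegative integers summing to `N`. -/
theorem normalization_constant_polynomial (w N : ℕ) (hw : 1 ≤ w)
    (η : Fin (w + 1) → ℝ) (hη : ∀ j, 0 < η j)
    (μ : Fin (w + 1) → ℕ → ℝ) (hμ : ∀ j k, 1 ≤ k → 0 < μ j k)
    (d : Fin w → ℝ) (hd : ∀ i, 0 ≤ d i) :
    (∑ p ∈ Finset.Nat.antidiagonalTuple ((w + 1) + (w + w)) N,
      (∏ j : Fin (w + 1),
          ∏ k ∈ Finset.range (p (Fin.castAdd (w + w) j)), η j / μ j (k + 1)) *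
        ∏ i : Fin w,
          (η i.succ * d i) ^
              (p (Fin.natAdd (w + 1) (Fin.castAdd w i)) +
                p (Fin.natAdd (w + 1) (Fin.natAdd w i))) /
            ((Nat.factorial (p (Fin.natAdd (w + 1) (Fin.castAdd w i))) : ℝ) *
              (Nat.factorial (p (Fin.natAdd (w + 1) (Fin.natAdd w i))) : ℝ)))
      = ∑ n ∈ Finset.range (N + 1),
          (2 ^ n / (Nat.factorial n : ℝ) *
              ∑ q ∈ Finset.Nat.antidiagonalTuple (w + 1) (N - n),
                ∏ j : Fin (w + 1), ∏ k ∈ Finset.range (q j), η j / μ j (k + 1)) *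
            (∑ i : Fin w, η i.succ * d i) ^ n := by
  set x : Fin w → ℝ := fun i => η i.succ * d i with hx
  set h : ℝ := ∑ i : Fin w, x i with hh
  set S : ℕ → ℝ := fun m => ∑ q ∈ Finset.Nat.antidiagonalTuple (w + 1) m,
      ∏ j : Fin (w + 1), ∏ k ∈ Finset.range (q j), η j / μ j (k + 1) with hS
  rw [sum_antidiagonalTuple_split (w + 1) (w + w) N]
  have key : ∀ mk : ℕ × ℕ,
      (∑ q ∈ Finset.Nat.antidiagonalTuple (w + 1) mk.1,
        ∑ r ∈ Finset.Nat.antidiagonalTuple (w + w) mk.2,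
          (∏ j : Fin (w + 1),
              ∏ k ∈ Finset.range ((Fin.append q r) (Fin.castAdd (w + w) j)),
                η j / μ j (k + 1)) *
            ∏ i : Fin w,
              x i ^ ((Fin.append q r) (Fin.natAdd (w + 1) (Fin.castAdd w i)) +
                  (Fin.append q r) (Fin.natAdd (w + 1) (Fin.natAdd w i))) /
                ((Nat.factorial ((Fin.append q r) (Fin.natAdd (w + 1) (Fin.castAdd w i))) : ℝ) *
                  (Nat.factorial ((Fin.append q r) (Fin.natAdd (w + 1) (Fin.natAdd w i))) : ℝ)))
        = S mk.1 * ((2 * h) ^ mk.2 / (Nat.factorial mk.2 : ℝ)) := by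
    intro mk
    have hB : ∀ r ∈ Finset.Nat.antidiagonalTuple (w + w) mk.2, ∀ q : Fin (w + 1) → ℕ,
        (∏ i : Fin w,
          x i ^ ((Fin.append q r) (Fin.natAdd (w + 1) (Fin.castAdd w i)) +
              (Fin.append q r) (Fin.natAdd (w + 1) (Fin.natAdd w i))) /
            ((Nat.factorial ((Fin.append q r) (Fin.natAdd (w + 1) (Fin.castAdd w i))) : ℝ) *
              (Nat.factorial ((Fin.append q r) (Fin.natAdd (w + 1) (Fin.natAdd w i))) : ℝ)))
          = ∏ i : Fin (w + w), (Fin.append x x) i ^ r i / (Nat.factorial (r i) : ℝ) := by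
      intro r _ q
      rw [Fin.prod_univ_add (f := fun i => (Fin.append x x) i ^ r i / (Nat.factorial (r i) : ℝ)),
        ← Finset.prod_mul_distrib]
      refine Finset.prod_congr rfl fun i _ => ?_
      simp only [Fin.append_right, Fin.append_left]
      rw [pow_add, div_mul_div_comm]
    calc
      _ = ∑ q ∈ Finset.Nat.antidiagonalTuple (w + 1) mk.1,
            (∏ j : Fin (w + 1), ∏ k ∈ Finset.range (q j), η j / μ j (k + 1)) *
              ∑ r ∈ Finset.Nat.antidiagonalTuple (w + w) mk.2,
                ∏ i : Fin (w + w), (Fin.append x x) i ^ r i / (Nat.factorial (r i) : ℝ) := by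
        refine Finset.sum_congr rfl fun q _ => ?_
        rw [Finset.mul_sum]
        refine Finset.sum_congr rfl fun r hr => ?_
        rw [hB r hr q]
        congr 1
        refine Finset.prod_congr rfl fun j _ => ?_
        rw [Fin.append_left]
      _ = S mk.1 * ((2 * h) ^ mk.2 / (Nat.factorial mk.2 : ℝ)) := by
        rw [← Finset.sum_mul]
        congr 1
        rw [sum_prod_pow_div_factorial]
        congr 2
        rw [Fin.sum_univ_add (f := fun i => (Fin.append x x) i)]
        simp only [Fin.append_left, Fin.append_right]
        ring
  rw [Finset.sum_congr rfl fun mk _ => key mk, ← Finset.Nat.sum_antidiagonal_swap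
    (f := fun mk : ℕ × ℕ => S mk.1 * ((2 * h) ^ mk.2 / (Nat.factorial mk.2 : ℝ)))]
  simp only [Prod.fst_swap, Prod.snd_swap]
  rw [Finset.Nat.sum_antidiagonal_eq_sum_range_succ_mk]
  refine Finset.sum_congr rfl fun n _ => ?_
  rw [mul_pow]
  ring
end

section
/- Suppose the Gordon-Newell throughput TH(m) = G(m−1, J)/G(m, J) is nondecreasing in the population size m. Then for all k = 0,...,N−2 and n = 0,...,N−k−2, the inequality C_{n+k+1}(N, J̄) · C_k(N−1, J̄) ≥ C_{n+k+1}(N−1, J̄) · C_k(N, J̄) holds, where C_k(M, J̄) = G(M−k, J) · 2^k/k!. -/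
open Finset

lemma TH_mono_aux (G : ℕ → ℝ) (hGpos : ∀ m, 0 < G m)
    (hTH : ∀ m, 1 ≤ m → G (m - 1) / G m ≤ G m / G (m + 1))
    (a b : ℕ) (ha : 1 ≤ a) (hab : a ≤ b) :
    G (a - 1) / G a ≤ G (b - 1) / G b := by
  induction b, hab using Nat.le_induction with
  | base => exact le_refl _
  | succ b hb ih =>
    refine ih.trans ?_
    have h1 : 1 ≤ b := le_trans ha hb
    have := hTH b h1
    simpa using this

/-- Lemma "ungleichung": if the throughput `TH m = G(m−1)/G m` is nondecreasing
in the population size `m ≥ 1`, then for all `k = 0,…,N−2`, `n = 0,…,N−k−2`,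
`C_{n+k+1}(N) C_k(N−1) ≥ C_{n+k+1}(N−1) C_k(N)` where
`C_k(M) = G(M−k) · 2^k / k!`. -/
theorem coefficient_cross_inequality (G : ℕ → ℝ) (hGpos : ∀ m, 0 < G m)
    (hTH : ∀ m, 1 ≤ m → G (m - 1) / G m ≤ G m / G (m + 1))
    (C : ℕ → ℕ → ℝ)
    (hC : ∀ M k, C M k = G (M - k) * 2 ^ k / (Nat.factorial k : ℝ))
    (N k n : ℕ) (hN : 2 ≤ N) (hk : k + 2 ≤ N) (hn : n + k + 2 ≤ N) :
    C N (n + k + 1) * C (N - 1) k ≥ C (N - 1) (n + k + 1) * C N k := by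
  have ha : 1 ≤ N - (n + k + 1) := by omega
  have hab : N - (n + k + 1) ≤ N - k := by omega
  have key := TH_mono_aux G hGpos hTH _ _ ha hab
  rw [div_le_div_iff₀ (hGpos _) (hGpos _)] at key
  have e1 : N - (n + k + 1) - 1 = N - 1 - (n + k + 1) := by omega
  have e2 : N - k - 1 = N - 1 - k := by omega
  rw [e1, e2] at key
  have hc : (0:ℝ) ≤ 2 ^ (n + k + 1) * 2 ^ k /
      ((Nat.factorial (n + k + 1) : ℝ) * (Nat.factorial k : ℝ)) := by positivity
  have h := mul_le_mul_of_nonneg_right key hc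
  rw [ge_iff_le, hC, hC, hC, hC]
  calc G (N - 1 - (n + k + 1)) * 2 ^ (n + k + 1) / (Nat.factorial (n + k + 1) : ℝ) *
        (G (N - k) * 2 ^ k / (Nat.factorial k : ℝ))
      = G (N - 1 - (n + k + 1)) * G (N - k) * (2 ^ (n + k + 1) * 2 ^ k /
        ((Nat.factorial (n + k + 1) : ℝ) * (Nat.factorial k : ℝ))) := by ring
    _ ≤ G (N - 1 - k) * G (N - (n + k + 1)) * (2 ^ (n + k + 1) * 2 ^ k /
        ((Nat.factorial (n + k + 1) : ℝ) * (Nat.factorial k : ℝ))) := h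
    _ = G (N - (n + k + 1)) * 2 ^ (n + k + 1) / (Nat.factorial (n + k + 1) : ℝ) *
        (G (N - 1 - k) * 2 ^ k / (Nat.factorial k : ℝ)) := by ring
end

section
/- Let C_0,...,C_N and D_0,...,D_{N−1} be positive reals satisfying C_{n+k+1} D_k ≥ C_k D_{n+k+1} for all k = 0,...,N−2 and n = 0,...,N−k−2 (where D_m := C'_m with C'_m = C_m(N−1)). If 0 ≤ h* < h, then (∑_{n=0}^{N−1} D_n (h*)^n)(∑_{k=0}^N C_k h^k) > (∑_{n=0}^{N−1} D_n h^n)(∑_{k=0}^N C_k (h*)^k). Equivalently, the ratio (∑_{n=0}^{N−1} D_n h^n)/(∑_{k=0}^N C_k h^k) is strictly decreasing in h on [0, ∞). -/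
open Finset

private lemma Tsign {h hs : ℝ} (hhs : 0 ≤ hs) (hlt : hs < h) {n k : ℕ} (hnk : n ≤ k) :
    0 ≤ hs ^ n * h ^ k - h ^ n * hs ^ k := by
  obtain ⟨m, rfl⟩ := Nat.exists_eq_add_of_le hnk
  have h0 : 0 ≤ h := le_trans hhs hlt.le
  have e : hs ^ n * h ^ (n + m) - h ^ n * hs ^ (n + m)
      = (hs * h) ^ n * (h ^ m - hs ^ m) := by
    rw [pow_add, pow_add, mul_pow]; ring
  rw [e]
  exact mul_nonneg (pow_nonneg (mul_nonneg hhs h0) n)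
    (sub_nonneg.2 (pow_le_pow_left₀ hhs hlt.le m))

/-- Core polynomial inequality for Theorem 1: positive coefficients `C_k`
(`k ≤ N`) and `D_n` (`n ≤ N−1`) satisfying the cross-product condition
`C_{n+k+1} D_k ≥ C_k D_{n+k+1}` imply, for `0 ≤ h* < h`,
`(∑_{n<N} D_n (h*)^n)(∑_{k≤N} C_k h^k) > (∑_{n<N} D_n h^n)(∑_{k≤N} C_k (h*)^k)`,
i.e. the ratio `(∑ D_n h^n)/(∑ C_k h^k)` is strictly decreasing in `h ≥ 0`. -/
theorem polynomial_ratio_decreasing (N : ℕ) (hN : 1 ≤ N)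
    (C D : ℕ → ℝ) (hC : ∀ k, k ≤ N → 0 < C k) (hD : ∀ n, n ≤ N - 1 → 0 < D n)
    (hcross : ∀ k n, k + 2 ≤ N → n + k + 2 ≤ N →
      C (n + k + 1) * D k ≥ C k * D (n + k + 1))
    (h hs : ℝ) (hhs : 0 ≤ hs) (hlt : hs < h) :
    ((∑ n ∈ Finset.range N, D n * hs ^ n) * (∑ k ∈ Finset.range (N + 1), C k * h ^ k)
        > (∑ n ∈ Finset.range N, D n * h ^ n) * (∑ k ∈ Finset.range (N + 1), C k * hs ^ k))
    ∧ (∑ n ∈ Finset.range N, D n * h ^ n) / (∑ k ∈ Finset.range (N + 1), C k * h ^ k)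
        < (∑ n ∈ Finset.range N, D n * hs ^ n) / (∑ k ∈ Finset.range (N + 1), C k * hs ^ k) := by
  have h0 : (0:ℝ) < h := lt_of_le_of_lt hhs hlt
  set f : ℕ → ℕ → ℝ := fun n k => D n * C k * (hs ^ n * h ^ k - h ^ n * hs ^ k) with hf
  -- cross condition in convenient form
  have cross' : ∀ a b, a < b → b < N → C a * D b ≤ C b * D a := by
    intro a b hab hbN
    have h1 : a + 2 ≤ N := by omega
    have h2 : (b - a - 1) + a + 2 ≤ N := by omega
    have := hcross a (b - a - 1) h1 h2
    have e : (b - a - 1) + a + 1 = b := by omega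
    rw [e] at this
    linarith
  -- pairwise nonnegativity
  have pair_nonneg : ∀ n k, n < N → k < N → 0 ≤ f n k + f k n := by
    intro n k hn hk
    have e : f n k + f k n
        = (C k * D n - C n * D k) * (hs ^ n * h ^ k - h ^ n * hs ^ k) := by
      simp only [hf]; ring
    rw [e]
    rcases lt_trichotomy n k with hlt' | heq | hgt
    · exact mul_nonneg (sub_nonneg.2 (cross' n k hlt' hk)) (Tsign hhs hlt hlt'.le)
    · subst heq; simp
    · have h1 : C n * D k - C k * D n ≥ 0 := sub_nonneg.2 (cross' k n hgt hn)
      have h2 := Tsign hhs hlt (n := k) (k := n) hgt.le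
      nlinarith
  -- the difference as a double sum
  have key : (∑ n ∈ Finset.range N, D n * hs ^ n) * (∑ k ∈ Finset.range (N + 1), C k * h ^ k)
      - (∑ n ∈ Finset.range N, D n * h ^ n) * (∑ k ∈ Finset.range (N + 1), C k * hs ^ k)
      = ∑ n ∈ Finset.range N, ∑ k ∈ Finset.range (N + 1), f n k := by
    rw [Finset.sum_mul_sum, Finset.sum_mul_sum, ← Finset.sum_sub_distrib]
    refine Finset.sum_congr rfl fun n _ => ?_
    rw [← Finset.sum_sub_distrib]
    refine Finset.sum_congr rfl fun k _ => ?_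
    simp only [hf]; ring
  -- split off k = N
  have split : ∑ n ∈ Finset.range N, ∑ k ∈ Finset.range (N + 1), f n k
      = (∑ n ∈ Finset.range N, ∑ k ∈ Finset.range N, f n k)
        + ∑ n ∈ Finset.range N, f n N := by
    rw [← Finset.sum_add_distrib]
    exact Finset.sum_congr rfl fun n _ => Finset.sum_range_succ _ N
  -- square part nonnegative via symmetrization
  have hA : 0 ≤ ∑ n ∈ Finset.range N, ∑ k ∈ Finset.range N, f n k := by
    have h2A : 2 * (∑ n ∈ Finset.range N, ∑ k ∈ Finset.range N, f n k)
        = ∑ n ∈ Finset.range N, ∑ k ∈ Finset.range N, (f n k + f k n) := by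
      rw [two_mul]
      nth_rewrite 2 [Finset.sum_comm]
      rw [← Finset.sum_add_distrib]
      exact Finset.sum_congr rfl fun n _ => (Finset.sum_add_distrib).symm
    have : 0 ≤ ∑ n ∈ Finset.range N, ∑ k ∈ Finset.range N, (f n k + f k n) :=
      Finset.sum_nonneg fun n hn => Finset.sum_nonneg fun k hk =>
        pair_nonneg n k (Finset.mem_range.1 hn) (Finset.mem_range.1 hk)
    linarith
  -- boundary part strictly positive
  have hB : 0 < ∑ n ∈ Finset.range N, f n N := by
    apply Finset.sum_pos'
    · intro n hn
      have hn' := Finset.mem_range.1 hn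
      exact mul_nonneg (mul_nonneg (hD n (by omega)).le (hC N le_rfl).le)
        (Tsign hhs hlt hn'.le)
    · refine ⟨0, Finset.mem_range.2 (by omega), ?_⟩
      have : hs ^ 0 * h ^ N - h ^ 0 * hs ^ N = h ^ N - hs ^ N := by ring
      simp only [hf, this]
      have hpow : hs ^ N < h ^ N := pow_lt_pow_left₀ hlt hhs (by omega)
      exact mul_pos (mul_pos (hD 0 (by omega)) (hC N le_rfl)) (by linarith)
  have main : (∑ n ∈ Finset.range N, D n * hs ^ n) * (∑ k ∈ Finset.range (N + 1), C k * h ^ k)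
      > (∑ n ∈ Finset.range N, D n * h ^ n) * (∑ k ∈ Finset.range (N + 1), C k * hs ^ k) := by
    have : 0 < ∑ n ∈ Finset.range N, ∑ k ∈ Finset.range (N + 1), f n k := by
      rw [split]; linarith
    linarith [key ▸ this]
  refine ⟨main, ?_⟩
  have Ppos : ∀ s : ℝ, 0 ≤ s → 0 < ∑ k ∈ Finset.range (N + 1), C k * s ^ k := by
    intro s hs0
    apply Finset.sum_pos'
    · intro k hk
      have hk' : k ≤ N := Nat.lt_succ_iff.1 (Finset.mem_range.1 hk)
      exact mul_nonneg (hC k hk').le (pow_nonneg hs0 k)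
    · exact ⟨0, Finset.mem_range.2 (Nat.succ_pos N), by simpa using hC 0 (Nat.zero_le N)⟩
  rw [div_lt_div_iff₀ (Ppos h h0.le) (Ppos hs hhs)]
  exact main
end

section
/- If x* minimizes h(x) = ∑_{j=2}^J ρ_j d_j(x) over x ∈ ℝ², and the throughput satisfies TH(N; x) = P(h(x))/Q(h(x)) where P(h) = ∑_{n=0}^{N−1} C_n(N−1) h^n and Q(h) = ∑_{k=0}^N C_k(N) h^k with positive coefficients satisfying C_{n+k+1}(N) C_k(N−1) ≥ C_{n+k+1}(N−1) C_k(N) for all k = 0,...,N−2, n = 0,...,N−k−2, then x* maximizes TH(N; x) over ℝ². -/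
open Finset

lemma weber_cross_key (N : ℕ) (hN : 1 ≤ N) (C D : ℕ → ℝ)
    (hC : ∀ k, k ≤ N → 0 < C k) (hD : ∀ n, n ≤ N - 1 → 0 < D n)
    (hcross : ∀ k n, k + 2 ≤ N → n + k + 2 ≤ N →
      C (n + k + 1) * D k ≥ D (n + k + 1) * C k)
    (a b : ℝ) (ha : 0 ≤ a) (hab : a ≤ b) :
    (∑ n ∈ range N, D n * b ^ n) * (∑ k ∈ range (N + 1), C k * a ^ k) ≤
      (∑ n ∈ range N, D n * a ^ n) * (∑ k ∈ range (N + 1), C k * b ^ k) := by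
  have hb : 0 ≤ b := ha.trans hab
  have hpow : ∀ n k : ℕ, n ≤ k → b ^ n * a ^ k ≤ a ^ n * b ^ k := by
    intro n k hnk
    have h1 : a ^ k = a ^ n * a ^ (k - n) := by rw [← pow_add]; congr 1; omega
    have h2 : b ^ k = b ^ n * b ^ (k - n) := by rw [← pow_add]; congr 1; omega
    rw [h1, h2]
    have h3 : a ^ (k - n) ≤ b ^ (k - n) := pow_le_pow_left₀ ha hab _
    have h4 : (0:ℝ) ≤ a ^ n * b ^ n := by positivity
    nlinarith [mul_le_mul_of_nonneg_left h3 h4]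
  have hcoef : ∀ n k : ℕ, n ≤ k → k ≤ N - 1 → D k * C n ≤ D n * C k := by
    intro n k hnk hk
    rcases eq_or_lt_of_le hnk with rfl | h
    · linarith
    · have hcc := hcross n (k - n - 1) (by omega) (by omega)
      have he : (k - n - 1) + n + 1 = k := by omega
      rw [he] at hcc
      linarith
  -- split off the k = N term
  rw [Finset.sum_range_succ, Finset.sum_range_succ]
  set P := fun t : ℝ => ∑ n ∈ range N, D n * t ^ n with hP
  set Q := fun t : ℝ => ∑ k ∈ range N, C k * t ^ k with hQ
  have hlast : P b * (C N * a ^ N) ≤ P a * (C N * b ^ N) := by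
    simp only [hP]
    rw [Finset.sum_mul, Finset.sum_mul]
    apply Finset.sum_le_sum
    intro n hn
    have hnN : n ≤ N := le_of_lt (Finset.mem_range.mp hn)
    have hp := hpow n N hnN
    have hDn := hD n (by have := Finset.mem_range.mp hn; omega)
    have hCN := hC N le_rfl
    linarith [mul_le_mul_of_nonneg_left hp (mul_nonneg hDn.le hCN.le)]
  have hsq : P b * Q a ≤ P a * Q b := by
    have key : 0 ≤ P a * Q b - P b * Q a := by
      have expand : P a * Q b - P b * Q a =
          ∑ n ∈ range N, ∑ k ∈ range N,
            (D n * C k) * (a ^ n * b ^ k - b ^ n * a ^ k) := by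
        simp only [hP, hQ, Finset.sum_mul_sum, ← Finset.sum_sub_distrib]
        apply Finset.sum_congr rfl
        intro n _
        apply Finset.sum_congr rfl
        intro k _
        ring
      have comm : ∑ n ∈ range N, ∑ k ∈ range N,
            (D n * C k) * (a ^ n * b ^ k - b ^ n * a ^ k) =
          ∑ n ∈ range N, ∑ k ∈ range N,
            (D k * C n) * (a ^ k * b ^ n - b ^ k * a ^ n) := by
        rw [Finset.sum_comm]
      have Gnonneg : ∀ n ∈ range N, ∀ k ∈ range N,
          0 ≤ (D n * C k) * (a ^ n * b ^ k - b ^ n * a ^ k) +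
              (D k * C n) * (a ^ k * b ^ n - b ^ k * a ^ n) := by
        intro n hn k hk
        have hnN : n ≤ N - 1 := by have := Finset.mem_range.mp hn; omega
        have hkN : k ≤ N - 1 := by have := Finset.mem_range.mp hk; omega
        rcases le_total n k with hle | hle
        · have h1 := hcoef n k hle hkN
          have h2 := hpow n k hle
          nlinarith [mul_nonneg (sub_nonneg.mpr h1) (sub_nonneg.mpr h2)]
        · have h1 := hcoef k n hle hnN
          have h2 := hpow k n hle
          nlinarith [mul_nonneg (sub_nonneg.mpr h1) (sub_nonneg.mpr h2)]
      have htwice : 0 ≤ 2 * (P a * Q b - P b * Q a) := by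
        have : 2 * (P a * Q b - P b * Q a) =
            ∑ n ∈ range N, ∑ k ∈ range N,
              ((D n * C k) * (a ^ n * b ^ k - b ^ n * a ^ k) +
               (D k * C n) * (a ^ k * b ^ n - b ^ k * a ^ n)) := by
          rw [expand, two_mul]
          nth_rewrite 2 [comm]
          rw [← Finset.sum_add_distrib]
          apply Finset.sum_congr rfl
          intro n _
          rw [← Finset.sum_add_distrib]
        rw [this]
        exact Finset.sum_nonneg fun n hn =>
          Finset.sum_nonneg fun k hk => Gnonneg n hn k hk
      linarith
    linarith
  calc P b * (Q a + C N * a ^ N) = P b * Q a + P b * (C N * a ^ N) := by ring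
    _ ≤ P a * Q b + P a * (C N * b ^ N) := add_le_add hsq hlast
    _ = P a * (Q b + C N * b ^ N) := by ring

/-- Theorem 1 (optimal location): if `x*` minimizes the weighted Weber objective
`h(x) = ∑_j ρ_j d_j(x)` over the plane, and the throughput has the product-form
representation `TH(N; x) = P(h(x))/Q(h(x))` with positive coefficients
satisfying the cross-product inequality, then `x*` maximizes `TH(N; ·)`. -/
theorem weber_solution_maximizes_throughput (m N : ℕ) (hm : 1 ≤ m) (hN : 1 ≤ N)
    (ρ : Fin m → ℝ) (hρ : ∀ j, 0 < ρ j) (hρsum : ∑ j : Fin m, ρ j = 1)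
    (d : Fin m → (ℝ × ℝ) → ℝ) (hd : ∀ j x, 0 ≤ d j x)
    (hconv : ∀ j, ConvexOn ℝ Set.univ (d j))
    (C : ℕ → ℕ → ℝ)
    (hCpos : ∀ k, k ≤ N → 0 < C N k)
    (hDpos : ∀ n, n ≤ N - 1 → 0 < C (N - 1) n)
    (hcross : ∀ k n, k + 2 ≤ N → n + k + 2 ≤ N →
      C N (n + k + 1) * C (N - 1) k ≥ C (N - 1) (n + k + 1) * C N k)
    (TH : (ℝ × ℝ) → ℝ)
    (hTH : ∀ x, TH x =
      (∑ n ∈ Finset.range N, C (N - 1) n * (∑ j : Fin m, ρ j * d j x) ^ n) /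
        (∑ k ∈ Finset.range (N + 1), C N k * (∑ j : Fin m, ρ j * d j x) ^ k))
    (xs : ℝ × ℝ)
    (hxs : ∀ x : ℝ × ℝ, ∑ j : Fin m, ρ j * d j xs ≤ ∑ j : Fin m, ρ j * d j x) :
    ∀ x : ℝ × ℝ, TH x ≤ TH xs := by
  intro x
  set a := ∑ j : Fin m, ρ j * d j xs with haDef
  set b := ∑ j : Fin m, ρ j * d j x with hbDef
  have ha : 0 ≤ a :=
    Finset.sum_nonneg fun j _ => mul_nonneg (hρ j).le (hd j xs)
  have hab : a ≤ b := hxs x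
  have hb : 0 ≤ b := ha.trans hab
  have hQpos : ∀ t : ℝ, 0 ≤ t →
      0 < ∑ k ∈ Finset.range (N + 1), C N k * t ^ k := by
    intro t ht
    apply Finset.sum_pos'
    · intro k hk
      exact mul_nonneg (hCpos k (by have := Finset.mem_range.mp hk; omega)).le
        (pow_nonneg ht k)
    · exact ⟨0, Finset.mem_range.mpr (by omega), by
        simpa using (hCpos 0 (by omega))⟩
  rw [hTH x, hTH xs]
  rw [div_le_div_iff₀ (hQpos b hb) (hQpos a ha)]
  exact weber_cross_key N hN (C N) (C (N - 1)) hCpos hDpos hcross a b ha hab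
end

section
/- In a two-station cyclic closed network with constant rates, i.e. G(m) = ∑_{k=0}^m a^k b^{m−k} for positive reals a, b, the throughput TH(m) = G(m−1)/G(m) is nondecreasing in m ≥ 1. -/
open Finset

/-- Two-station cyclic closed network with constant rates:
`G(m) = ∑_{k=0}^m a^k b^{m−k}` with `a, b > 0` has nondecreasing throughput
`TH(m) = G(m−1)/G(m)` for `m ≥ 1`. -/
theorem two_station_throughput_monotone (a b : ℝ) (ha : 0 < a) (hb : 0 < b)
    (G : ℕ → ℝ)
    (hG : ∀ m, G m = ∑ k ∈ Finset.range (m + 1), a ^ k * b ^ (m - k)) :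
    ∀ m, 1 ≤ m → G (m - 1) / G m ≤ G m / G (m + 1) := by
  -- positivity of G
  have hGpos : ∀ m, 0 < G m := by
    intro m
    rw [hG m]
    apply Finset.sum_pos
    · intro k _
      positivity
    · exact Finset.nonempty_range_add_one
  -- recurrence A : G (m+1) = a * G m + b^(m+1)
  have recA : ∀ m : ℕ, G (m + 1) = a * G m + b ^ (m + 1) := by
    intro m
    rw [hG (m + 1), hG m, Finset.sum_range_succ' (fun k => a ^ k * b ^ (m + 1 - k))]
    simp only [pow_zero, one_mul, Nat.sub_zero, Finset.mul_sum]
    congr 1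
    apply Finset.sum_congr rfl
    intro k hk
    have hk' : k ≤ m := Nat.lt_succ_iff.mp (Finset.mem_range.mp hk)
    have : m + 1 - (k + 1) = m - k := by omega
    rw [this]
    ring
  -- recurrence B : G (m+1) = b * G m + a^(m+1)
  have recB : ∀ m : ℕ, G (m + 1) = b * G m + a ^ (m + 1) := by
    intro m
    rw [hG (m + 1), hG m, Finset.sum_range_succ (fun k => a ^ k * b ^ (m + 1 - k))]
    simp only [Nat.sub_self, pow_zero, mul_one, Finset.mul_sum]
    congr 1
    apply Finset.sum_congr rfl
    intro k hk
    have hk' : k ≤ m := Nat.lt_succ_iff.mp (Finset.mem_range.mp hk)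
    have : m + 1 - k = (m - k) + 1 := by omega
    rw [this]
    ring
  intro m hm
  obtain ⟨n, rfl⟩ := Nat.exists_eq_add_of_le' hm
  simp only [Nat.add_sub_cancel] at *
  have h1 : G (n + 1) = a * G n + b ^ (n + 1) := recA n
  have h2 : G (n + 1) = b * G n + a ^ (n + 1) := recB n
  have h3 : G (n + 1 + 1) = a * G (n + 1) + b ^ (n + 1 + 1) := recA (n + 1)
  have key : G n * G (n + 1 + 1) ≤ G (n + 1) * G (n + 1) := by
    have hid : G (n + 1) * G (n + 1) - G n * G (n + 1 + 1)
        = a ^ (n + 1) * b ^ (n + 1) := by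
      rw [h3, h1, pow_succ b (n + 1)]
      linear_combination b ^ (n + 1) * (h1.symm.trans h2)
    nlinarith [pow_pos ha (n + 1), pow_pos hb (n + 1)]
  rw [div_le_div_iff₀ (hGpos (n + 1)) (hGpos (n + 1 + 1))]
  linarith [key]
end

section
/- For a single-server bottleneck: if G(m) = ∑_{k=0}^m r^k B(m−k) where r = η_1/μ_1 and B(ℓ) = ∑_{n_2+...+n_J = ℓ} ∏_{j=2}^J ∏_{i=1}^{n_j} η_j/(i μ_j) (all other stations infinite servers), then TH(m) = G(m−1)/G(m) → 1/r = μ_1/η_1 as m → ∞, i.e. the asymptotic throughput is bounded by the bottleneck service rate. -/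
open Finset Filter

lemma exp_partial_tendsto (x : ℝ) :
    Tendsto (fun n => ∑ i ∈ Finset.range n, x ^ i / (Nat.factorial i : ℝ)) atTop
      (nhds (Real.exp x)) := by
  have h := (NormedSpace.expSeries_div_summable x).hasSum.tendsto_sum_nat
  have e : Real.exp x = ∑' (n : ℕ), x ^ n / (Nat.factorial n : ℝ) := by
    rw [Real.exp_eq_exp_ℝ, NormedSpace.exp_eq_tsum_div]
  rw [e]; exact h

/-- Bottleneck bound: for a single-server station (rate ratio `r = η_1/μ_1`)
fed by infinite servers (`s = ∑_{j≥2} η_j/μ_j`), the normalization constant is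
`G(m) = ∑_{k=0}^m r^k s^{m−k}/(m−k)!` and the throughput
`TH(m) = G(m−1)/G(m)` converges to `1/r = μ_1/η_1` as `m → ∞`. -/
theorem bottleneck_throughput_limit (r s : ℝ) (hr : 0 < r) (hs : 0 < s)
    (G : ℕ → ℝ)
    (hG : ∀ m, G m = ∑ k ∈ Finset.range (m + 1),
      r ^ k * s ^ (m - k) / (Nat.factorial (m - k) : ℝ)) :
    Tendsto (fun m : ℕ => G (m - 1) / G m) atTop (nhds (1 / r)) := by
  set x : ℝ := s / r with hx
  set T : ℕ → ℝ := fun n => ∑ i ∈ Finset.range (n + 1), x ^ i / (Nat.factorial i : ℝ)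
    with hT
  have hTpos : ∀ n, 0 < T n := by
    intro n
    apply Finset.sum_pos
    · intro i _
      positivity
    · exact ⟨0, Finset.mem_range.mpr (Nat.succ_pos n)⟩
  have hGT : ∀ m, G m = r ^ m * T m := by
    intro m
    rw [hG m]
    rw [Finset.mul_sum]
    rw [← Finset.sum_range_reflect (fun k => r ^ k * s ^ (m - k) / (Nat.factorial (m - k) : ℝ)) (m + 1)]
    apply Finset.sum_congr rfl
    intro i hi
    have hi' : i ≤ m := Nat.lt_succ_iff.mp (Finset.mem_range.mp hi)
    have h1 : m + 1 - 1 - i = m - i := by omega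
    have h2 : m - (m - i) = i := by omega
    rw [h1, h2, hx, pow_sub₀ r hr.ne' hi']
    field_simp
    rw [div_pow]
    field_simp [hr.ne']
  have hTlim : Tendsto T atTop (nhds (Real.exp x)) :=
    (exp_partial_tendsto x).comp (tendsto_add_atTop_nat 1)
  have hTlim' : Tendsto (fun m : ℕ => T (m - 1)) atTop (nhds (Real.exp x)) :=
    hTlim.comp (tendsto_sub_atTop_nat 1)
  have hexp : Real.exp x ≠ 0 := (Real.exp_pos x).ne'
  have hmain : Tendsto (fun m : ℕ => (1 / r) * (T (m - 1) / T m)) atTop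
      (nhds ((1 / r) * (Real.exp x / Real.exp x))) :=
    tendsto_const_nhds.mul (hTlim'.div hTlim hexp)
  rw [div_self hexp, mul_one] at hmain
  apply hmain.congr'
  filter_upwards [eventually_ge_atTop 1] with m hm
  rw [hGT m, hGT (m - 1)]
  have : r ^ m = r ^ (m - 1) * r := by
    rw [← pow_succ]
    congr 1
    omega
  rw [this]
  have hrm : r ^ (m - 1) ≠ 0 := pow_ne_zero _ hr.ne'
  field_simp
end
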